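/- There exists a sequence of rational numbers that is a computable sequence of real numbers but not a computable sequence of rational numbers. -/

import Mathlib

open Filter Topology Encodable Denumerable

attribute [local instance] Encodable.decidableRangeEncode

/-! ### gcd is primitive recursive -/

private def gstep : ℕ × ℕ → ℕ × ℕ := fun p => if p.1 = 0 then p else (p.2 % p.1, p.1)

private lemma gstep_zero (t b : ℕ) : gstep^[t] (0, b) = (0, b) := by
  induction t with
  | zero => rfl
  | succ t ih => rw [Function.iterate_succ_apply]; simpa [gstep] using ih

private lemma gstep_gcd : ∀ t a b : ℕ, a ≤ t → (gstep^[t] (a, b)).2 = Nat.gcd a b := by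
  intro t
  induction t with
  | zero => intro a b h; interval_cases a; simp
  | succ t ih =>
    intro a b h
    rcases Nat.eq_zero_or_pos a with rfl | ha
    · simp [gstep_zero]
    · rw [Function.iterate_succ_apply]
      have : gstep (a, b) = (b % a, a) := by simp [gstep, Nat.pos_iff_ne_zero.mp ha]
      rw [this, ih _ _ (by have := Nat.mod_lt b ha; omega)]
      exact (Nat.gcd_rec a b).symm

private lemma primrec_gstep : Primrec gstep :=
  Primrec.ite (Primrec.eq.comp .fst (.const 0)) .id
    ((Primrec.nat_mod.comp .snd .fst).pair .fst)

private lemma primrec_iter : Primrec fun p : ℕ × (ℕ × ℕ) => gstep^[p.1] p.2 := by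
  have h := Primrec.nat_rec' (f := fun p : ℕ × (ℕ × ℕ) => p.1)
    (g := fun p : ℕ × (ℕ × ℕ) => p.2)
    (h := fun _ q => gstep q.2) .fst .snd (primrec_gstep.comp (Primrec.snd.comp .snd)).to₂
  have aux : ∀ (n : ℕ) (x : ℕ × ℕ), Nat.rec x (fun _ ih => gstep ih) n = gstep^[n] x := by
    intro n x
    induction n with
    | zero => simp
    | succ n ih => rw [Function.iterate_succ_apply']; exact congrArg gstep ih
  exact h.of_eq fun p => aux p.1 p.2

private lemma primrec_gcd : Primrec fun p : ℕ × ℕ => Nat.gcd p.1 p.2 :=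
  ((Primrec.snd.comp (primrec_iter.comp (Primrec.fst.pair .id)))).of_eq fun p =>
    gstep_gcd p.1 p.1 p.2 le_rfl

/-! ### the range of the old rational encoding -/

private def inS (y : ℕ) : Prop :=
  0 < y.unpair.2 ∧ Nat.gcd ((y.unpair.1 + 1) / 2) y.unpair.2 = 1

private instance : DecidablePred inS := fun y =>
  inferInstanceAs (Decidable (_ ∧ _))

private lemma primrecPred_inS : PrimrecPred inS := by
  have h2 : Primrec fun y : ℕ => y.unpair.2 := Primrec.snd.comp .unpair
  have h1 : Primrec fun y : ℕ => (y.unpair.1 + 1) / 2 :=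
    Primrec.nat_div.comp (Primrec.succ.comp (Primrec.fst.comp .unpair)) (.const 2)
  exact PrimrecPred.and (Primrec.nat_lt.comp (.const 0) h2)
    (Primrec.eq.comp (primrec_gcd.comp (h1.pair h2)) (.const 1))

private lemma encode_int_ofNat (n : ℕ) : encode (Int.ofNat n) = 2 * n := rfl
private lemma encode_int_negSucc (n : ℕ) : encode (Int.negSucc n) = 2 * n + 1 := rfl

private lemma encode_int_succ_div_two (z : ℤ) : (encode z + 1) / 2 = z.natAbs := by
  cases z with
  | ofNat n => rw [encode_int_ofNat]; simp [Int.natAbs_natCast]; omega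
  | negSucc n => rw [encode_int_negSucc]; simp [Int.natAbs_negSucc]; omega

private lemma encode_rat_old (q : ℚ) :
    @encode ℚ Rat.instEncodable q = Nat.pair (encode q.num) q.den := rfl

private lemma mem_range_iff_inS (y : ℕ) :
    y ∈ Set.range (@encode ℚ Rat.instEncodable) ↔ inS y := by
  constructor
  · rintro ⟨q, rfl⟩
    rw [encode_rat_old]
    constructor
    · rw [Nat.unpair_pair]; exact q.pos
    · rw [Nat.unpair_pair]
      simpa [encode_int_succ_div_two] using q.reduced
  · rintro ⟨h1, h2⟩
    refine ⟨Rat.mk' (Denumerable.ofNat ℤ y.unpair.1) y.unpair.2 h1.ne'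
      ?_, ?_⟩
    · show Nat.gcd _ _ = 1
      rwa [← encode_int_succ_div_two (Denumerable.ofNat ℤ y.unpair.1),
        Denumerable.encode_ofNat]
    · rw [encode_rat_old]
      show Nat.pair (encode (Denumerable.ofNat ℤ y.unpair.1)) y.unpair.2 = y
      rw [Denumerable.encode_ofNat, Nat.pair_unpair]

/-! ### the new (denumerable) rational encoding, as a primrec counting function -/

private def cntC : ℕ → ℕ := fun n => Nat.rec 0 (fun m ih => ih + if inS m then 1 else 0) n

private lemma primrec_cntC : Primrec cntC :=
  Primrec.nat_rec₁ 0
    ((Primrec.nat_add.comp .snd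
      (Primrec.ite (primrecPred_inS.comp .fst) (.const 1) (.const 0))).to₂)

private lemma countP_eq_cntC (n : ℕ) :
    (List.range n).countP (fun y => decide (y ∈ Set.range (@encode ℚ Rat.instEncodable))) =
      cntC n := by
  induction n with
  | zero => rfl
  | succ n ih =>
    rw [List.range_succ, List.countP_append]
    show _ = cntC n + if inS n then 1 else 0
    rw [← ih]
    congr 1
    rw [List.countP_cons, List.countP_nil]
    by_cases h : inS n
    · simp [decide_eq_true ((mem_range_iff_inS n).mpr h), h]
    · simp [decide_eq_false (fun hh => h ((mem_range_iff_inS n).mp hh)), h]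

private lemma encode_rat_new (q : ℚ) :
    @encode ℚ (Primcodable.ofDenumerable ℚ).toEncodable q =
      cntC (Nat.pair (encode q.num) q.den) := by
  rw [← countP_eq_cntC, ← encode_rat_old]
  rfl

/-! ### the powers of 1/2 -/

private def pw : ℕ → ℚ := fun s => (((2 ^ s : ℕ) : ℚ))⁻¹

private lemma pw_pos (s : ℕ) : 0 < pw s := by
  have : (0:ℚ) < ((2 ^ s : ℕ) : ℚ) := by positivity
  exact inv_pos.mpr this

private lemma pw_num (s : ℕ) : (pw s).num = 1 :=
  Rat.inv_natCast_num_of_pos (by positivity)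

private lemma pw_den (s : ℕ) : (pw s).den = 2 ^ s :=
  Rat.inv_natCast_den_of_pos (by positivity)

private lemma pw_cast (s : ℕ) : ((pw s : ℚ) : ℝ) = (2 : ℝ)⁻¹ ^ s := by
  rw [pw]
  push_cast
  rw [← inv_pow]

private lemma primrec_pw : Primrec pw := by
  have h2 : Primrec fun s : ℕ => 2 ^ s := by
    have := Primrec.nat_rec₁ (f := fun _ ih => ih * 2) 1
      ((Primrec.nat_mul.comp .snd (.const 2)).to₂)
    exact this.of_eq fun s => by
      induction s with
      | zero => rfl
      | succ n ih => show _ * 2 = _; rw [ih, pow_succ]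
  have H : Primrec fun s : ℕ => cntC (Nat.pair 2 (2 ^ s)) :=
    primrec_cntC.comp (Primrec₂.natPair.comp (.const 2) h2)
  exact Primrec.encode_iff.mp (H.of_eq fun s => by
    rw [encode_rat_new, pw_num, pw_den]
    rfl)

/-! ### the halting-time sequence -/

private def hpb (n s : ℕ) : Bool :=
  (Nat.Partrec.Code.evaln s (Denumerable.ofNat Nat.Partrec.Code n) 0).isSome

private lemma primrec_hpb : Primrec₂ hpb :=
  (Primrec.option_isSome.comp
    (Nat.Partrec.Code.primrec_evaln.comp
      ((Primrec.snd.pair ((Primrec.ofNat _).comp .fst)).pair (.const 0)))).to₂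

private def RR (n t : ℕ) : Option ℕ :=
  Nat.rec none (fun s ih => ih <|> (bif hpb n s then some s else none)) t

private lemma primrec_RR : Primrec₂ RR := by
  have h := Primrec.nat_rec' (f := fun p : ℕ × ℕ => p.2)
    (g := fun _ : ℕ × ℕ => (none : Option ℕ))
    (h := fun p q => q.2 <|> (bif hpb p.1 q.1 then some q.1 else none))
    .snd (.const none)
    ((Primrec.option_orElse.comp (Primrec.snd.comp .snd)
      (Primrec.cond (primrec_hpb.comp (Primrec.fst.comp .fst) (Primrec.fst.comp .snd))
        (Primrec.option_some.comp (Primrec.fst.comp .snd)) (.const none))).to₂)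
  exact (h.of_eq fun p => rfl).to₂

private lemma RR_eq_none {n t : ℕ} (h : ∀ s < t, hpb n s = false) : RR n t = none := by
  induction t with
  | zero => rfl
  | succ t ih =>
    show (RR n t <|> _) = none
    rw [ih fun s hs => h s (hs.trans (Nat.lt_succ_self t)), h t (Nat.lt_succ_self t)]
    rfl

private lemma RR_eq_some {n t s : ℕ} (hs : hpb n s = true) (hmin : ∀ u < s, hpb n u = false)
    (hst : s < t) : RR n t = some s := by
  induction t with
  | zero => omega
  | succ t ih =>
    show (RR n t <|> _) = some s
    rcases Nat.lt_succ_iff_lt_or_eq.mp hst with h | rfl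
    · rw [ih h]; rfl
    · rw [RR_eq_none hmin, hs]; rfl

private def QQ : ℕ → ℚ := fun m => ((RR m.unpair.1 (m.unpair.2 + 1)).map pw).getD 0

private lemma primrec_QQ : Primrec QQ :=
  Primrec.option_getD.comp
    (Primrec.option_map
      (primrec_RR.comp (Primrec.fst.comp .unpair)
        (Primrec.succ.comp (Primrec.snd.comp .unpair)))
      ((primrec_pw.comp .snd).to₂))
    (.const 0)

/-- `x` is a computable sequence of real numbers. -/
def CompRealSeq (x : ℕ → ℝ) : Prop :=
  ∃ q : ℕ → ℚ, Computable q ∧ ∀ n k : ℕ, |x n - (q (Nat.pair n k) : ℝ)| ≤ (2 : ℝ)⁻¹ ^ k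

private lemma hpb_iff (c : Nat.Partrec.Code) :
    (∃ s, hpb (encode c) s = true) ↔ (c.eval 0).Dom := by
  constructor
  · rintro ⟨s, hs⟩
    rw [hpb, Denumerable.ofNat_encode] at hs
    obtain ⟨a, ha⟩ := Option.isSome_iff_exists.mp hs
    exact Part.dom_iff_mem.mpr ⟨a, Nat.Partrec.Code.evaln_complete.mpr ⟨s, ha⟩⟩
  · intro h
    obtain ⟨a, ha⟩ := Part.dom_iff_mem.mp h
    obtain ⟨s, hs⟩ := Nat.Partrec.Code.evaln_complete.mp ha
    exact ⟨s, by rw [hpb, Denumerable.ofNat_encode]; exact Option.isSome_iff_exists.mpr ⟨a, hs⟩⟩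

theorem stmt6 : ∃ x : ℕ → ℚ, CompRealSeq (fun n => (x n : ℝ)) ∧ ¬ Computable x := by
  classical
  refine ⟨fun n => if h : ∃ s, hpb n s = true then pw (Nat.find h) else 0, ⟨QQ,
    primrec_QQ.to_comp, ?_⟩, ?_⟩
  · intro n k
    have hQ : QQ (Nat.pair n k) = ((RR n (k + 1)).map pw).getD 0 := by
      rw [QQ]; rw [Nat.unpair_pair]
    by_cases h : ∃ s, hpb n s = true
    · simp only [dif_pos h]
      by_cases hk : Nat.find h ≤ k
      · have hR : RR n (k + 1) = some (Nat.find h) :=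
          RR_eq_some (Nat.find_spec h)
            (fun u hu => Bool.eq_false_iff.mpr (Nat.find_min h hu)) (by omega)
        rw [hQ, hR]
        simp only [Option.map_some, Option.getD_some, sub_self, abs_zero]
        positivity
      · have hR : RR n (k + 1) = none :=
          RR_eq_none (fun s hs => Bool.eq_false_iff.mpr (Nat.find_min h (by omega)))
        rw [hQ, hR]
        simp only [Option.map_none, Option.getD_none, Rat.cast_zero, sub_zero]
        rw [abs_of_pos (by rw [pw_cast]; positivity), pw_cast]
        exact pow_le_pow_of_le_one (by norm_num) (by norm_num) (by omega)
    · simp only [dif_neg h]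
      have hR : RR n (k + 1) = none :=
        RR_eq_none (fun s _ => Bool.eq_false_iff.mpr (fun ht => h ⟨s, ht⟩))
      rw [hQ, hR]
      simp only [Option.map_none, Option.getD_none, Rat.cast_zero, sub_zero, abs_zero]
      positivity
  · intro hx
    refine ComputablePred.halting_problem 0 ?_
    rw [ComputablePred.computable_iff]
    refine ⟨fun c => decide
      ((if h : ∃ s, hpb (encode c) s = true then pw (Nat.find h) else 0) ≠ 0), ?_, ?_⟩
    · have h2 : PrimrecPred fun q : ℚ => q ≠ 0 :=
        (Primrec.eq.comp .id (.const (0 : ℚ))).not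
      exact h2.decide.to_comp.comp (hx.comp Computable.encode)
    · funext c
      apply propext
      rw [decide_eq_true_iff]
      rw [← hpb_iff c]
      constructor
      · intro h
        rw [dif_pos h]
        exact (pw_pos _).ne'
      · intro h
        by_contra hn
        rw [dif_neg hn] at h
        exact h rfl
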